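/- Let g be a probability measure supported on [-M, M] and τ > 0 with τ² > M². Then the function V(φ) = -log ∫ exp(-(φ-θ)²/(2τ²)) dg(θ) is strongly convex on ℝ with V''(φ) ≥ 1/τ² - M²/τ⁴ > 0. In particular the Gaussian-smoothed density N_τ * g is strongly log-concave when τ² > M². -/

import Mathlib

open MeasureTheory Real

private lemma aux_int {g : Measure ℝ} [IsProbabilityMeasure g] {M : ℝ}
    (hae : ∀ᵐ θ ∂g, θ ∈ Set.Icc (-M) M) {u : ℝ → ℝ} (hc : Continuous u)
    {C : ℝ} (hC : ∀ θ ∈ Set.Icc (-M) M, |u θ| ≤ C) : Integrable u g :=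
  (integrable_const C).mono' hc.aestronglyMeasurable
    (hae.mono fun θ hθ => by simpa [Real.norm_eq_abs] using hC θ hθ)

private lemma aux_deriv {g : Measure ℝ} [IsProbabilityMeasure g] {M : ℝ}
    (hae : ∀ᵐ θ ∂g, θ ∈ Set.Icc (-M) M) {u u' : ℝ → ℝ → ℝ}
    (hu_cont : ∀ x, Continuous (u x)) (hu'_cont : ∀ x, Continuous (u' x))
    (hderiv : ∀ x θ, HasDerivAt (fun y => u y θ) (u' x θ) x)
    (x₀ C : ℝ)
    (hC : ∀ θ ∈ Set.Icc (-M) M, ∀ x ∈ Metric.ball x₀ 1, |u' x θ| ≤ C)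
    (hint : Integrable (u x₀) g) :
    HasDerivAt (fun x => ∫ θ, u x θ ∂g) (∫ θ, u' x₀ θ ∂g) x₀ := by
  have h := hasDerivAt_integral_of_dominated_loc_of_deriv_le (μ := g) (𝕜 := ℝ)
    (F := u) (F' := u') (bound := fun _ => C) (Metric.ball_mem_nhds x₀ one_pos)
    (Filter.Eventually.of_forall fun x => (hu_cont x).aestronglyMeasurable)
    hint ((hu'_cont x₀).aestronglyMeasurable)
    (hae.mono fun θ hθ x hx => by simpa [Real.norm_eq_abs] using hC θ hθ x hx)
    (integrable_const C)
    (hae.mono fun θ _ x _ => hderiv x θ)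
  exact h.2

private lemma aux_cont {g : Measure ℝ} [IsProbabilityMeasure g] {M : ℝ}
    (hae : ∀ᵐ θ ∂g, θ ∈ Set.Icc (-M) M) {u : ℝ → ℝ → ℝ}
    (hu_cont : ∀ x, Continuous (u x))
    (hcx : ∀ θ, Continuous (fun x => u x θ))
    (x₀ C : ℝ)
    (hC : ∀ θ ∈ Set.Icc (-M) M, ∀ x ∈ Metric.ball x₀ 1, |u x θ| ≤ C) :
    ContinuousAt (fun x => ∫ θ, u x θ ∂g) x₀ := by
  apply continuousAt_of_dominated (bound := fun _ => C)
    (Filter.Eventually.of_forall fun x => (hu_cont x).aestronglyMeasurable)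
  · filter_upwards [Metric.ball_mem_nhds x₀ one_pos] with x hx
    filter_upwards [hae] with θ hθ
    simpa [Real.norm_eq_abs] using hC θ hθ x hx
  · exact integrable_const C
  · exact Filter.Eventually.of_forall fun θ => (hcx θ).continuousAt

private noncomputable def k0 (τ x θ : ℝ) : ℝ := Real.exp (-(x - θ) ^ 2 / (2 * τ ^ 2))
private noncomputable def k1 (τ x θ : ℝ) : ℝ := (θ - x) / τ ^ 2 * k0 τ x θ
private noncomputable def k2 (τ x θ : ℝ) : ℝ :=
  ((θ - x) ^ 2 / τ ^ 4 - 1 / τ ^ 2) * k0 τ x θ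

private lemma k0_pos (τ x θ : ℝ) : 0 < k0 τ x θ := Real.exp_pos _

private lemma k0_le_one {τ : ℝ} (hτ : 0 < τ) (x θ : ℝ) : k0 τ x θ ≤ 1 := by
  unfold k0
  rw [Real.exp_le_one_iff]
  apply div_nonpos_of_nonpos_of_nonneg
  · simp [sq_nonneg]
  · positivity

private lemma k0_cont_theta (τ x : ℝ) : Continuous (k0 τ x) := by
  unfold k0; fun_prop

private lemma k0_cont_x (τ θ : ℝ) : Continuous (fun x => k0 τ x θ) := by
  unfold k0; fun_prop

private lemma k1_cont_theta (τ x : ℝ) : Continuous (k1 τ x) := by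
  unfold k1 k0; fun_prop

private lemma k2_cont_theta (τ x : ℝ) : Continuous (k2 τ x) := by
  unfold k2 k0; fun_prop

private lemma k2_cont_x (τ θ : ℝ) : Continuous (fun x => k2 τ x θ) := by
  unfold k2 k0; fun_prop

private lemma hasDerivAt_k0 {τ : ℝ} (hτ : τ ≠ 0) (x θ : ℝ) :
    HasDerivAt (fun y => k0 τ y θ) (k1 τ x θ) x := by
  have hin : HasDerivAt (fun y : ℝ => -(y - θ) ^ 2 / (2 * τ ^ 2)) ((θ - x) / τ ^ 2) x := by
    have h := (((hasDerivAt_id x).sub_const θ).pow 2).neg.div_const (2 * τ ^ 2)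
    refine h.congr_deriv ?_
    field_simp
    simp only [id]
    ring
  have h2 := hin.exp
  unfold k0 k1
  convert h2 using 1
  unfold k0
  ring

private lemma hasDerivAt_k1 {τ : ℝ} (hτ : τ ≠ 0) (x θ : ℝ) :
    HasDerivAt (fun y => k1 τ y θ) (k2 τ x θ) x := by
  have hlin : HasDerivAt (fun y : ℝ => (θ - y) / τ ^ 2) (-1 / τ ^ 2) x := by
    have h := ((hasDerivAt_id x).const_sub θ).div_const (τ ^ 2)
    exact h
  have h2 := hlin.mul (hasDerivAt_k0 hτ x θ)
  unfold k1 k2 at *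
  refine h2.congr_deriv ?_
  unfold k0
  field_simp
  ring

set_option maxHeartbeats 2000000 in
theorem stmt3 (M τ : ℝ) (hM : 0 < M) (hτ : M < τ)
    (g : Measure ℝ) [IsProbabilityMeasure g] (hg : g (Set.Icc (-M) M) = 1) :
    0 < 1 / τ ^ 2 - M ^ 2 / τ ^ 4 ∧
    ContDiff ℝ 2 (fun x : ℝ => -Real.log (∫ θ, Real.exp (-(x - θ) ^ 2 / (2 * τ ^ 2)) ∂g)) ∧
    (∀ φ : ℝ, 1 / τ ^ 2 - M ^ 2 / τ ^ 4 ≤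
      iteratedDeriv 2 (fun x : ℝ => -Real.log (∫ θ, Real.exp (-(x - θ) ^ 2 / (2 * τ ^ 2)) ∂g)) φ) ∧
    StrongConvexOn Set.univ (1 / τ ^ 2 - M ^ 2 / τ ^ 4)
      (fun x : ℝ => -Real.log (∫ θ, Real.exp (-(x - θ) ^ 2 / (2 * τ ^ 2)) ∂g)) := by
  have hτ0 : 0 < τ := hM.trans hτ
  have hτne : τ ≠ 0 := hτ0.ne'
  have hτ2 : (0 : ℝ) < τ ^ 2 := by positivity
  have hτ4 : (0 : ℝ) < τ ^ 4 := by positivity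
  set m : ℝ := 1 / τ ^ 2 - M ^ 2 / τ ^ 4 with hm
  have hae : ∀ᵐ θ ∂g, θ ∈ Set.Icc (-M) M := by
    have h0 : g (Set.Icc (-M) M)ᶜ = 0 := by
      rw [prob_compl_eq_zero_iff measurableSet_Icc]; exact hg
    exact mem_ae_iff.mpr h0
  set F0 : ℝ → ℝ := fun x => ∫ θ, k0 τ x θ ∂g with hF0
  set F1 : ℝ → ℝ := fun x => ∫ θ, k1 τ x θ ∂g with hF1
  set F2 : ℝ → ℝ := fun x => ∫ θ, k2 τ x θ ∂g with hF2
  set V : ℝ → ℝ := fun x => -Real.log (F0 x) with hVdef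
  -- integrability
  have hint0 : ∀ x, Integrable (k0 τ x) g := fun x =>
    aux_int hae (k0_cont_theta τ x) (fun θ _ => by
      rw [abs_of_pos (k0_pos τ x θ)]; exact k0_le_one hτ0 x θ)
  -- bounds
  have habs1 : ∀ x₀ : ℝ, ∀ θ ∈ Set.Icc (-M) M, ∀ y ∈ Metric.ball x₀ 1,
      |θ - y| ≤ M + |x₀| + 1 := by
    intro x₀ θ hθ y hy
    rw [Metric.mem_ball, Real.dist_eq] at hy
    obtain ⟨h1, h2⟩ := hθ
    obtain ⟨h3, h4⟩ := abs_lt.mp hy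
    rw [abs_le]
    constructor <;> nlinarith [le_abs_self x₀, neg_abs_le x₀]
  have hb1 : ∀ x₀ : ℝ, ∀ θ ∈ Set.Icc (-M) M, ∀ y ∈ Metric.ball x₀ 1,
      |k1 τ y θ| ≤ (M + |x₀| + 1) / τ ^ 2 := by
    intro x₀ θ hθ y hy
    unfold k1
    rw [abs_mul, abs_div, abs_of_pos hτ2, abs_of_pos (k0_pos τ y θ)]
    calc |θ - y| / τ ^ 2 * k0 τ y θ
        ≤ (M + |x₀| + 1) / τ ^ 2 * 1 := by
          apply mul_le_mul _ (k0_le_one hτ0 y θ) (k0_pos τ y θ).le (by positivity)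
          gcongr
          exact habs1 x₀ θ hθ y hy
      _ = (M + |x₀| + 1) / τ ^ 2 := mul_one _
  have hb2 : ∀ x₀ : ℝ, ∀ θ ∈ Set.Icc (-M) M, ∀ y ∈ Metric.ball x₀ 1,
      |k2 τ y θ| ≤ (M + |x₀| + 1) ^ 2 / τ ^ 4 + 1 / τ ^ 2 := by
    intro x₀ θ hθ y hy
    unfold k2
    rw [abs_mul, abs_of_pos (k0_pos τ y θ)]
    have h1 : |θ - y| ≤ M + |x₀| + 1 := habs1 x₀ θ hθ y hy
    have h2 : |(θ - y) ^ 2 / τ ^ 4 - 1 / τ ^ 2| ≤ (M + |x₀| + 1) ^ 2 / τ ^ 4 + 1 / τ ^ 2 := by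
      refine (abs_sub _ _).trans ?_
      have h3 : (θ - y) ^ 2 ≤ (M + |x₀| + 1) ^ 2 := by
        rw [← sq_abs (θ - y)]; exact pow_le_pow_left₀ (abs_nonneg _) h1 2
      rw [abs_div, abs_div, abs_of_pos hτ4, abs_of_pos hτ2, abs_of_nonneg (sq_nonneg _), abs_one]
      gcongr
    calc |(θ - y) ^ 2 / τ ^ 4 - 1 / τ ^ 2| * k0 τ y θ
        ≤ ((M + |x₀| + 1) ^ 2 / τ ^ 4 + 1 / τ ^ 2) * 1 :=
          mul_le_mul h2 (k0_le_one hτ0 y θ) (k0_pos τ y θ).le (by positivity)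
      _ = (M + |x₀| + 1) ^ 2 / τ ^ 4 + 1 / τ ^ 2 := mul_one _
  have hint1 : ∀ x, Integrable (k1 τ x) g := fun x =>
    aux_int hae (k1_cont_theta τ x) (fun θ hθ =>
      hb1 x θ hθ x (Metric.mem_ball_self one_pos))
  -- derivatives of F0, F1
  have hD0 : ∀ x, HasDerivAt F0 (F1 x) x := fun x =>
    aux_deriv hae (k0_cont_theta τ) (k1_cont_theta τ) (fun y θ => hasDerivAt_k0 hτne y θ)
      x ((M + |x| + 1) / τ ^ 2) (hb1 x) (hint0 x)
  have hD1 : ∀ x, HasDerivAt F1 (F2 x) x := fun x =>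
    aux_deriv hae (k1_cont_theta τ) (k2_cont_theta τ) (fun y θ => hasDerivAt_k1 hτne y θ)
      x ((M + |x| + 1) ^ 2 / τ ^ 4 + 1 / τ ^ 2) (hb2 x) (hint1 x)
  have hC2 : Continuous F2 := by
    rw [continuous_iff_continuousAt]
    intro x
    exact aux_cont hae (k2_cont_theta τ) (k2_cont_x τ) x
      ((M + |x| + 1) ^ 2 / τ ^ 4 + 1 / τ ^ 2) (hb2 x)
  have hC0 : Continuous F0 := Differentiable.continuous (fun x => (hD0 x).differentiableAt)
  have hC1 : Continuous F1 := Differentiable.continuous (fun x => (hD1 x).differentiableAt)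
  -- positivity of F0
  have hF0pos : ∀ x, 0 < F0 x := by
    intro x
    have hlow : ∀ᵐ θ ∂g, Real.exp (-(|x| + M) ^ 2 / (2 * τ ^ 2)) ≤ k0 τ x θ := by
      filter_upwards [hae] with θ hθ
      unfold k0
      apply Real.exp_le_exp.mpr
      rw [div_le_div_iff₀ (by positivity) (by positivity)]
      have : (x - θ) ^ 2 ≤ (|x| + M) ^ 2 := by
        obtain ⟨h1, h2⟩ := hθ
        nlinarith [le_abs_self x, neg_abs_le x, abs_nonneg x]
      nlinarith
    have h := integral_mono_ae (integrable_const _) (hint0 x) hlow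
    rw [integral_const] at h
    simp only [probReal_univ, smul_eq_mul, one_mul] at h
    exact lt_of_lt_of_le (Real.exp_pos _) h
  -- V and its derivatives
  have hgoalV : (fun x : ℝ => -Real.log (∫ θ, Real.exp (-(x - θ) ^ 2 / (2 * τ ^ 2)) ∂g)) = V :=
    rfl
  have hV1 : ∀ x, HasDerivAt V (-(F1 x / F0 x)) x := fun x =>
    ((hD0 x).log (hF0pos x).ne').neg
  have hdV : deriv V = fun x => -(F1 x / F0 x) := funext fun x => (hV1 x).deriv
  have hV2 : ∀ x, HasDerivAt (fun y => -(F1 y / F0 y))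
      (-((F2 x * F0 x - F1 x * F1 x) / F0 x ^ 2)) x := fun x =>
    (((hD1 x).div (hD0 x) (hF0pos x).ne')).neg
  -- second derivative formula
  have hVpp : ∀ φ, iteratedDeriv 2 V φ = (F1 φ ^ 2 - F2 φ * F0 φ) / F0 φ ^ 2 := by
    intro φ
    rw [show (2 : ℕ) = 1 + 1 from rfl, iteratedDeriv_succ, iteratedDeriv_one, hdV,
      (hV2 φ).deriv]
    ring
  -- key inequality
  have key : ∀ φ, m ≤ (F1 φ ^ 2 - F2 φ * F0 φ) / F0 φ ^ 2 := by
    intro φ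
    have hbi : Integrable (fun θ => θ * k0 τ φ θ) g := by
      refine aux_int hae (continuous_id.mul (k0_cont_theta τ φ)) (C := M) fun θ hθ => ?_
      rw [abs_mul, abs_of_pos (k0_pos τ φ θ)]
      calc |θ| * k0 τ φ θ ≤ M * 1 :=
            mul_le_mul (abs_le.mpr ⟨hθ.1, hθ.2⟩) (k0_le_one hτ0 φ θ)
              (k0_pos τ φ θ).le hM.le
        _ = M := mul_one M
    have hci : Integrable (fun θ => θ ^ 2 * k0 τ φ θ) g := by
      refine aux_int hae ((continuous_id.pow 2).mul (k0_cont_theta τ φ)) (C := M ^ 2)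
        fun θ hθ => ?_
      rw [abs_mul, abs_of_pos (k0_pos τ φ θ), abs_of_nonneg (sq_nonneg θ)]
      have hθ2 : θ ^ 2 ≤ M ^ 2 := by nlinarith [hθ.1, hθ.2]
      calc θ ^ 2 * k0 τ φ θ ≤ M ^ 2 * 1 :=
            mul_le_mul hθ2 (k0_le_one hτ0 φ θ) (k0_pos τ φ θ).le (by positivity)
        _ = M ^ 2 := mul_one _
    set a : ℝ := F0 φ with hadef
    set b : ℝ := ∫ θ, θ * k0 τ φ θ ∂g with hbdef
    set c : ℝ := ∫ θ, θ ^ 2 * k0 τ φ θ ∂g with hcdef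
    have ha : 0 < a := hF0pos φ
    have hF1eq : F1 φ = (b - φ * a) / τ ^ 2 := by
      have hrw : (fun θ => k1 τ φ θ) =
          fun θ => (1 / τ ^ 2) * (θ * k0 τ φ θ) - (φ / τ ^ 2) * k0 τ φ θ := by
        funext θ; unfold k1; ring
      show (∫ θ, k1 τ φ θ ∂g) = (b - φ * a) / τ ^ 2
      rw [hrw, integral_sub (hbi.const_mul _) ((hint0 φ).const_mul _),
        integral_const_mul, integral_const_mul]
      rw [hbdef, hadef]
      show 1 / τ ^ 2 * b - φ / τ ^ 2 * a = (b - φ * a) / τ ^ 2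
      field_simp
    have hF2eq : F2 φ = (c - 2 * φ * b + φ ^ 2 * a) / τ ^ 4 - a / τ ^ 2 := by
      have hrw : (fun θ => k2 τ φ θ) =
          fun θ => ((1 / τ ^ 4) * (θ ^ 2 * k0 τ φ θ) - (2 * φ / τ ^ 4) * (θ * k0 τ φ θ)) +
            (φ ^ 2 / τ ^ 4 - 1 / τ ^ 2) * k0 τ φ θ := by
        funext θ; unfold k2; ring
      have hI1 : Integrable (fun θ => (1 / τ ^ 4) * (θ ^ 2 * k0 τ φ θ) -
          (2 * φ / τ ^ 4) * (θ * k0 τ φ θ)) g := (hci.const_mul _).sub (hbi.const_mul _)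
      show (∫ θ, k2 τ φ θ ∂g) = _
      rw [hrw, integral_add hI1 ((hint0 φ).const_mul _),
        integral_sub (hci.const_mul _) (hbi.const_mul _),
        integral_const_mul, integral_const_mul, integral_const_mul]
      show 1 / τ ^ 4 * c - 2 * φ / τ ^ 4 * b + (φ ^ 2 / τ ^ 4 - 1 / τ ^ 2) * a = _
      field_simp
      ring
    have hcb : c ≤ M ^ 2 * a := by
      have h := integral_mono_ae hci ((hint0 φ).const_mul (M ^ 2))
        (hae.mono fun θ hθ => by
          have hθ2 : θ ^ 2 ≤ M ^ 2 := by nlinarith [hθ.1, hθ.2]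
          exact mul_le_mul_of_nonneg_right hθ2 (k0_pos τ φ θ).le)
      rwa [integral_const_mul] at h
    rw [hF1eq, hF2eq]
    have hexp : (((b - φ * a) / τ ^ 2) ^ 2 -
        ((c - 2 * φ * b + φ ^ 2 * a) / τ ^ 4 - a / τ ^ 2) * a) / a ^ 2 =
        1 / τ ^ 2 + (b ^ 2 - c * a) / (τ ^ 4 * a ^ 2) := by
      field_simp
      ring
    rw [hexp, hm]
    have h1 : (-(M ^ 2 * a ^ 2)) / (τ ^ 4 * a ^ 2) ≤ (b ^ 2 - c * a) / (τ ^ 4 * a ^ 2) := by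
      gcongr
      nlinarith [sq_nonneg b, mul_le_mul_of_nonneg_right hcb ha.le]
    have h2 : (-(M ^ 2 * a ^ 2)) / (τ ^ 4 * a ^ 2) = -(M ^ 2 / τ ^ 4) := by
      field_simp
    rw [h2] at h1
    linarith
  -- part 1
  have part1 : 0 < m := by
    rw [hm, sub_pos, div_lt_div_iff₀ hτ4 hτ2]
    have hM2 : M ^ 2 < τ ^ 2 := by nlinarith
    nlinarith [mul_lt_mul_of_pos_right hM2 hτ2]
  -- ContDiff
  have hddV : deriv (deriv V) = fun x => -((F2 x * F0 x - F1 x * F1 x) / F0 x ^ 2) := by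
    rw [hdV]; exact funext fun x => (hV2 x).deriv
  have hcontdd : Continuous (deriv (deriv V)) := by
    rw [hddV]
    exact (((hC2.mul hC0).sub (hC1.mul hC1)).div (hC0.pow 2)
      (fun x => pow_ne_zero 2 (hF0pos x).ne')).neg
  have part2 : ContDiff ℝ 2 V := by
    rw [show (2 : WithTop ℕ∞) = 1 + 1 by norm_num, contDiff_succ_iff_deriv]
    refine ⟨fun x => (hV1 x).differentiableAt, by simp, ?_⟩
    rw [contDiff_one_iff_deriv]
    refine ⟨?_, hcontdd⟩
    rw [hdV]
    exact fun x => (hV2 x).differentiableAt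
  -- StrongConvexOn
  have part4 : StrongConvexOn Set.univ m V := by
    rw [strongConvexOn_iff_convex]
    have hWeq : (fun x : ℝ => V x - m / 2 * ‖x‖ ^ 2) = fun x => V x - m / 2 * x ^ 2 :=
      funext fun x => by rw [Real.norm_eq_abs, sq_abs]
    rw [hWeq]
    have hq : ∀ x : ℝ, HasDerivAt (fun y : ℝ => m / 2 * y ^ 2) (m * x) x := by
      intro x
      have h := (hasDerivAt_pow 2 x).const_mul (m / 2)
      refine h.congr_deriv ?_
      push_cast
      ring
    have hW1 : ∀ x, HasDerivAt (fun y => V y - m / 2 * y ^ 2) (-(F1 x / F0 x) - m * x) x :=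
      fun x => (hV1 x).sub (hq x)
    have hdW : deriv (fun y => V y - m / 2 * y ^ 2) = fun x => -(F1 x / F0 x) - m * x :=
      funext fun x => (hW1 x).deriv
    have hW2 : ∀ x, HasDerivAt (fun y => -(F1 y / F0 y) - m * y)
        (-((F2 x * F0 x - F1 x * F1 x) / F0 x ^ 2) - m) x := by
      intro x
      have hmx : HasDerivAt (fun y : ℝ => m * y) m x := by
        simpa using (hasDerivAt_id x).const_mul m
      exact (hV2 x).sub hmx
    apply convexOn_univ_of_deriv2_nonneg
    · exact fun x => (hW1 x).differentiableAt
    · rw [hdW]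
      exact fun x => (hW2 x).differentiableAt
    · intro x
      have hiter : deriv^[2] (fun y => V y - m / 2 * y ^ 2) x =
          deriv (deriv (fun y => V y - m / 2 * y ^ 2)) x := by
        rw [show (2 : ℕ) = 1 + 1 from rfl, Function.iterate_succ_apply',
          Function.iterate_one]
      rw [hiter, hdW, (hW2 x).deriv]
      have hrw : -((F2 x * F0 x - F1 x * F1 x) / F0 x ^ 2) =
          (F1 x ^ 2 - F2 x * F0 x) / F0 x ^ 2 := by ring
      rw [hrw]
      linarith [key x]
  refine ⟨part1, ?_, ?_, ?_⟩
  · rw [hgoalV]; exact part2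
  · intro φ
    rw [hgoalV, hVpp φ]
    exact key φ
  · rw [hgoalV]; exact part4
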